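/- Comparison principle: let p > 1 and let a : [x₀, ∞) → ℝ be continuous, bounded, with a(x) > 0 for x > x₀. Suppose W, V : [x₀, ∞) → ℝ are C¹ with |W'|^{p-2}W' and |V'|^{p-2}V' differentiable, W' and V' bounded, W(x₀) = V(x₀), lim_{x→∞} W(x) = lim_{x→∞} V(x) = 0, and (|W'|^{p-2}W')' ≤ a(x)|W|^{p-2}W, (|V'|^{p-2}V')' ≥ a(x)|V|^{p-2}V on (x₀, ∞). Then V(x) ≤ W(x) for all x ≥ x₀. -/

import Mathlib

open Real Filter

lemma phi_mono {p : ℝ} (hp : 1 < p) : StrictMono (fun s : ℝ => |s| ^ (p-2) * s) := by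
  have hq : (0:ℝ) < p - 1 := by linarith
  have key : ∀ s : ℝ, 0 ≤ s → |s| ^ (p-2) * s = s ^ (p-1) := by
    intro s hs
    rcases eq_or_lt_of_le hs with h | h
    · rw [← h]
      simp [Real.zero_rpow (by intro hc; linarith : p - 1 ≠ 0)]
    · rw [abs_of_pos h, show p - 1 = (p-2) + 1 by ring, Real.rpow_add_one (ne_of_gt h)]
  have keyneg : ∀ s : ℝ, s ≤ 0 → |s| ^ (p-2) * s = -((-s) ^ (p-1)) := by
    intro s hs
    rw [← key (-s) (by linarith), abs_neg]; ring
  intro s t hst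
  rcases le_or_gt 0 s with hs | hs
  · simp only []
    rw [key s hs, key t (hs.trans hst.le)]
    exact Real.rpow_lt_rpow hs hst hq
  · rcases le_or_gt t 0 with ht | ht
    · simp only []
      rw [keyneg s hs.le, keyneg t ht, neg_lt_neg_iff]
      exact Real.rpow_lt_rpow (by linarith) (by linarith) hq
    · simp only []
      rw [keyneg s hs.le, key t ht.le]
      have h1 : 0 < (-s) ^ (p-1) := Real.rpow_pos_of_pos (by linarith) _
      have h2 : 0 < t ^ (p-1) := Real.rpow_pos_of_pos ht _
      linarith

theorem stmt2 (p x₀ : ℝ) (hp : 1 < p) (a W V : ℝ → ℝ)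
    (ha_cont : ContinuousOn a (Set.Ici x₀))
    (ha_bdd : ∃ C, ∀ x ∈ Set.Ici x₀, |a x| ≤ C)
    (ha_pos : ∀ x > x₀, 0 < a x)
    (hW1 : ∀ x ∈ Set.Ici x₀, DifferentiableAt ℝ W x)
    (hV1 : ∀ x ∈ Set.Ici x₀, DifferentiableAt ℝ V x)
    (hW'b : ∃ C, ∀ x ∈ Set.Ici x₀, |deriv W x| ≤ C)
    (hV'b : ∃ C, ∀ x ∈ Set.Ici x₀, |deriv V x| ≤ C)
    (gW gV : ℝ → ℝ)
    (hgW : ∀ x ∈ Set.Ioi x₀, HasDerivAt (fun y => |deriv W y| ^ (p - 2) * deriv W y) (gW x) x)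
    (hgV : ∀ x ∈ Set.Ioi x₀, HasDerivAt (fun y => |deriv V y| ^ (p - 2) * deriv V y) (gV x) x)
    (hWsup : ∀ x ∈ Set.Ioi x₀, gW x ≤ a x * |W x| ^ (p - 2) * W x)
    (hVsub : ∀ x ∈ Set.Ioi x₀, a x * |V x| ^ (p - 2) * V x ≤ gV x)
    (heq : W x₀ = V x₀)
    (hWlim : Tendsto W atTop (nhds 0)) (hVlim : Tendsto V atTop (nhds 0)) :
    ∀ x ∈ Set.Ici x₀, V x ≤ W x := by
  by_contra hcon
  push_neg at hcon
  obtain ⟨x₁, hx₁, hx₁lt⟩ := hcon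
  set u : ℝ → ℝ := fun x => V x - W x with hu
  have hu0 : u x₀ = 0 := by simp [hu, heq]
  have hux₁ : 0 < u x₁ := by simp only [hu]; linarith
  have hud : ∀ x ∈ Set.Ici x₀, DifferentiableAt ℝ u x := fun x hx => (hV1 x hx).sub (hW1 x hx)
  have hulim : Tendsto u atTop (nhds 0) := by
    have := hVlim.sub hWlim
    simpa using this
  have hev : ∀ᶠ x in atTop, u x < u x₁ := hulim.eventually_lt_const hux₁
  obtain ⟨M, hM⟩ := eventually_atTop.mp hev
  set K := Set.Icc x₀ (max M x₁) with hK
  have hx₁K : x₁ ∈ K := ⟨hx₁, le_max_right _ _⟩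
  have hKsub : K ⊆ Set.Ici x₀ := fun x hx => hx.1
  have hucK : ContinuousOn u K := fun x hx => ((hud x (hKsub hx)).continuousAt).continuousWithinAt
  obtain ⟨c, hcK, hcmax⟩ := isCompact_Icc.exists_isMaxOn ⟨x₁, hx₁K⟩ hucK
  have hglob : ∀ x ∈ Set.Ici x₀, u x ≤ u c := by
    intro x hx
    rcases le_or_gt x (max M x₁) with h | h
    · exact hcmax ⟨hx, h⟩
    · have h1 : u x < u x₁ := hM x (le_of_lt (lt_of_le_of_lt (le_max_left _ _) h))
      have h2 : u x₁ ≤ u c := hcmax hx₁K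
      linarith
  have hucpos : 0 < u c := lt_of_lt_of_le hux₁ (hcmax hx₁K)
  have hcx₀ : x₀ < c := by
    rcases eq_or_lt_of_le hcK.1 with h | h
    · exfalso; rw [← h] at hucpos; linarith
    · exact h
  have hloc : IsLocalMax u c := by
    filter_upwards [Ici_mem_nhds hcx₀] with x hx using hglob x hx
  have hVWc : deriv V c = deriv W c := by
    have hd0 : deriv u c = 0 := hloc.deriv_eq_zero
    have : deriv u c = deriv V c - deriv W c :=
      deriv_sub (hV1 c hcx₀.le) (hW1 c hcx₀.le)
    rw [this] at hd0; linarith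
  have hcont : ContinuousAt u c := (hud c hcx₀.le).continuousAt
  have hev2 : ∀ᶠ x in nhds c, 0 < u x ∧ x₀ < x :=
    (hcont.eventually_const_lt hucpos).and (eventually_gt_nhds hcx₀)
  obtain ⟨ε, hε, hball⟩ := Metric.eventually_nhds_iff.mp hev2
  set d := c + ε/2 with hd
  have hcd : c < d := by simp [hd]; linarith
  have hIcc : ∀ x ∈ Set.Icc c d, 0 < u x ∧ x₀ < x := by
    intro x hx
    apply hball
    rw [Real.dist_eq, abs_of_nonneg (by linarith [hx.1])]
    have := hx.2
    simp only [hd] at this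
    linarith
  set F : ℝ → ℝ := fun x => |deriv V x| ^ (p-2) * deriv V x - |deriv W x| ^ (p-2) * deriv W x
    with hF
  have hFd : ∀ x ∈ Set.Icc c d, HasDerivAt F (gV x - gW x) x := by
    intro x hx
    have hx₀' : x ∈ Set.Ioi x₀ := (hIcc x hx).2
    exact (hgV x hx₀').sub (hgW x hx₀')
  have hFmono : StrictMonoOn F (Set.Icc c d) := by
    apply strictMonoOn_of_deriv_pos (convex_Icc c d)
    · exact fun x hx => (hFd x hx).differentiableAt.continuousAt.continuousWithinAt
    · intro x hx
      rw [interior_Icc] at hx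
      have hx' : x ∈ Set.Icc c d := ⟨hx.1.le, hx.2.le⟩
      rw [(hFd x hx').deriv]
      obtain ⟨hupos, hxx₀⟩ := hIcc x hx'
      have h1 := hVsub x hxx₀
      have h2 := hWsup x hxx₀
      have ha := ha_pos x hxx₀
      have h3 : |W x| ^ (p-2) * W x < |V x| ^ (p-2) * V x :=
        phi_mono hp (by simp only [hu] at hupos; linarith : W x < V x)
      nlinarith [mul_lt_mul_of_pos_left h3 ha]
  have hFc : F c = 0 := by simp only [hF, hVWc]; ring
  have humono : StrictMonoOn u (Set.Icc c d) := by
    apply strictMonoOn_of_deriv_pos (convex_Icc c d)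
    · intro x hx
      exact ((hud x (le_of_lt (hIcc x hx).2)).continuousAt).continuousWithinAt
    · intro x hx
      rw [interior_Icc] at hx
      have hx' : x ∈ Set.Icc c d := ⟨hx.1.le, hx.2.le⟩
      have hxIci : x ∈ Set.Ici x₀ := le_of_lt (hIcc x hx').2
      have hFpos : 0 < F x := by
        have := hFmono (Set.left_mem_Icc.mpr hcd.le) hx' hx.1
        rw [hFc] at this; exact this
      have hlt : deriv W x < deriv V x := by
        have : |deriv W x| ^ (p-2) * deriv W x < |deriv V x| ^ (p-2) * deriv V x := by
          simp only [hF] at hFpos; linarith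
        exact (phi_mono hp).lt_iff_lt.mp this
      rw [show u = fun x => V x - W x from rfl, deriv_fun_sub (hV1 x hxIci) (hW1 x hxIci)]
      linarith
  have hfin : u c < u d :=
    humono (Set.left_mem_Icc.mpr hcd.le) (Set.right_mem_Icc.mpr hcd.le) hcd
  have : u d ≤ u c := hglob d (le_of_lt (lt_trans hcx₀ hcd))
  linarith
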